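/- Let M be an oriented closed connected manifold with fundamental group Γ, I a nonempty countable set, and (X_i, μ_i)_{i∈I} a family of standard Γ-spaces. Then the product Z = ∏_i X_i with the product measure and diagonal Γ-action is a standard Γ-space and ⎸M⎹^Z ≤ inf_{i∈I} ⎸M⎹^{X_i}. -/

import Mathlib

open scoped BigOperators
open Finsupp

noncomputable section

/-- The topological simplex of `x` (the definition of the older Mathlib, which has since
been replaced by `stdSimplex ℝ`). -/
abbrev SimplexCategory.toTopObj (x : SimplexCategory) : Set (Fin (x.len + 1) → NNReal) :=
  { f | ∑ i, f i = 1 }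

/-- The map of topological simplices induced by a morphism of `SimplexCategory`
(the definition of the older Mathlib). -/
def SimplexCategory.toTopMap {x y : SimplexCategory} (f : x ⟶ y) (g : x.toTopObj) :
    y.toTopObj :=
  ⟨fun i => ∑ j ∈ Finset.univ.filter (fun j => f.toOrderHom j = i), g.1 j, by
    simp only [SimplexCategory.toTopObj, Set.mem_ofPred_eq]
    rw [← Finset.sum_biUnion]
    · have hg : ∑ i, g.1 i = 1 := g.2
      convert hg
      simp [Finset.eq_univ_iff_forall]
    · convert Set.pairwiseDisjoint_filter _ _ _⟩

theorem SimplexCategory.continuous_toTopMap {x y : SimplexCategory} (f : x ⟶ y) :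
    Continuous (SimplexCategory.toTopMap f) := by
  refine Continuous.subtype_mk (continuous_pi fun i => ?_) _
  exact continuous_finsetSum _ (fun j _ => (continuous_apply _).comp continuous_subtype_val)

/-- The topological standard `n`-simplex. -/
abbrev TSimplex (n : ℕ) : Type :=
  (SimplexCategory.toTopObj (SimplexCategory.mk n))

/-- Singular `n`-simplices of a space `X`. -/
abbrev SSimplex (n : ℕ) (X : Type) [TopologicalSpace X] : Type := C(TSimplex n, X)

/-- Singular `n`-chains of `X` with coefficients in an abelian group `A`,
with its `ℓ¹`-flavoured finitely supported model. -/
abbrev SChains (n : ℕ) (X : Type) [TopologicalSpace X] (A : Type) [AddCommGroup A] : Type :=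
  SSimplex n X →₀ A

/-- The `i`-th face inclusion of topological simplices. -/
def face (n : ℕ) (i : Fin (n + 2)) : C(TSimplex n, TSimplex (n + 1)) :=
  ⟨fun t => SimplexCategory.toTopMap (SimplexCategory.δ i) t,
    SimplexCategory.continuous_toTopMap _⟩

/-- The singular boundary operator from degree `n+1` to degree `n`. -/
def bdryMap (n : ℕ) (X : Type) [TopologicalSpace X] (A : Type) [AddCommGroup A] :
    SChains (n + 1) X A →ₗ[ℤ] SChains n X A :=
  Finsupp.lsum ℤ fun σ =>
    ∑ i : Fin (n + 2), ((-1 : ℤ) ^ (i : ℕ)) •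
      (Finsupp.lsingle (σ.comp (face n i)) : A →ₗ[ℤ] SChains n X A)

/-- The boundary operator out of degree `n` (the zero map in degree `0`). -/
def bdryFrom (n : ℕ) (X : Type) [TopologicalSpace X] (A : Type) [AddCommGroup A] :
    SChains n X A →ₗ[ℤ] SChains (n - 1) X A :=
  match n with
  | 0 => 0
  | (m + 1) => bdryMap m X A

/-- Singular `n`-cycles. -/
def cyclesSub (n : ℕ) (X : Type) [TopologicalSpace X] (A : Type) [AddCommGroup A] :
    Submodule ℤ (SChains n X A) :=
  LinearMap.ker (bdryFrom n X A)

/-- Singular `n`-boundaries. -/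
def bdriesSub (n : ℕ) (X : Type) [TopologicalSpace X] (A : Type) [AddCommGroup A] :
    Submodule ℤ (SChains n X A) :=
  LinearMap.range (bdryMap n X A)

/-- The `ℓ¹`-norm of an integral singular chain. -/
def l1Z {n : ℕ} {X : Type} [TopologicalSpace X] (c : SChains n X ℤ) : ℝ :=
  c.sum fun _ a => |(a : ℝ)|

/-- The `ℓ¹`-norm of a real singular chain. -/
def l1R {n : ℕ} {X : Type} [TopologicalSpace X] (c : SChains n X ℝ) : ℝ :=
  c.sum fun _ a => |a|

/-- Change of coefficients `ℤ → ℝ` on singular chains. -/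
def castChain {n : ℕ} {X : Type} [TopologicalSpace X] (c : SChains n X ℤ) : SChains n X ℝ :=
  Finsupp.mapRange (fun a : ℤ => (a : ℝ)) Int.cast_zero c

/-- `z` is an integral fundamental cycle of `X` in degree `n`:  it is a cycle whose homology
class freely generates `H_n(X;ℤ)` (which for an oriented closed connected `n`-manifold
characterises the fundamental class up to sign). -/
def IsFundCycle (n : ℕ) (X : Type) [TopologicalSpace X] (z : SChains n X ℤ) : Prop :=
  z ∈ cyclesSub n X ℤ ∧
  (∀ w ∈ cyclesSub n X ℤ, ∃ k : ℤ, w - k • z ∈ bdriesSub n X ℤ) ∧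
  (∀ k : ℤ, k • z ∈ bdriesSub n X ℤ → k = 0)

/-- The `ℓ¹`-semi-norm (over `ℤ`) of the homology class of the cycle `z`. -/
def clNormZ (n : ℕ) (X : Type) [TopologicalSpace X] (z : SChains n X ℤ) : ℝ :=
  sInf {r : ℝ | ∃ c, c ∈ cyclesSub n X ℤ ∧ c - z ∈ bdriesSub n X ℤ ∧ r = l1Z c}

/-- The `ℓ¹`-semi-norm of the image in real homology of the class of the integral cycle `z`;
for a fundamental cycle `z` of `M` this is the simplicial volume `‖M‖`. -/
def realSV (n : ℕ) (X : Type) [TopologicalSpace X] (z : SChains n X ℤ) : ℝ :=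
  sInf {r : ℝ | ∃ c, c ∈ cyclesSub n X ℝ ∧ castChain z - c ∈ bdriesSub n X ℝ ∧ r = l1R c}

/-- The integral simplicial volume `‖X‖_ℤ`. -/
def intSV (n : ℕ) (X : Type) [TopologicalSpace X] : ℝ :=
  sInf {r : ℝ | ∃ z, IsFundCycle n X z ∧ r = clNormZ n X z}

/-- `N` is an oriented closed connected topological `n`-manifold (orientability is recorded
through the existence of fundamental cycles in the statements below). -/
def IsClosedConnectedManifold (n : ℕ) (N : Type) [TopologicalSpace N] : Prop :=
  CompactSpace N ∧ ConnectedSpace N ∧ T2Space N ∧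
    Nonempty (ChartedSpace (EuclideanSpace ℝ (Fin n)) N)

/-- The data contributing value `r` to the stable integral simplicial volume of `M`:
a `d`-sheeted covering `p : N → M` by an oriented closed connected `n`-manifold `N`
together with a fundamental cycle of `N`, with `r = ‖N‖_ℤ / d`. -/
def IsCoverDatum (n : ℕ) (M : Type) [TopologicalSpace M] (N : Type) [TopologicalSpace N]
    (p : N → M) (d : ℕ) (r : ℝ) : Prop :=
  IsClosedConnectedManifold n N ∧ 0 < d ∧ IsCoveringMap p ∧
    (∀ x : M, Nat.card (p ⁻¹' {x}) = d) ∧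
    ∃ z, IsFundCycle n N z ∧ r = clNormZ n N z / d

/-- The stable integral simplicial volume `‖M‖_ℤ^∞`. -/
def stisv (n : ℕ) (M : Type) [TopologicalSpace M] : ℝ :=
  sInf {r : ℝ | ∃ (N : Type) (tN : TopologicalSpace N) (p : N → M) (d : ℕ),
    @IsCoverDatum n M _ N tN p d r}

end

open MeasureTheory

noncomputable section

/-- A standard `Γ`-space structure on `X`: a probability measure on the standard Borel
space `X` together with a measurable measure-preserving (left) `Γ`-action. -/
structure StdStr (Γ : Type) [Group Γ] (X : Type) [MeasurableSpace X] where
  μ : Measure X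
  borel : StandardBorelSpace X
  prob : IsProbabilityMeasure μ
  act : Γ → X → X
  meas : ∀ g, MeasurePreserving (act g) μ μ
  act_one : ∀ x, act 1 x = x
  act_mul : ∀ g h x, act (g * h) x = act g (act h x)

variable {Γ : Type} [Group Γ] {X : Type} [MeasurableSpace X]

/-- The coefficient module `L^∞(X,μ;ℤ)` (for `b = true`) respectively `L^∞(X,μ;ℝ)`
(for `b = false`), realised as essentially bounded (and, if `b = true`, a.e.
integer-valued) elements of the space of a.e.-equivalence classes of measurable
real-valued functions. -/
def LinfG (S : StdStr Γ X) (b : Bool) : AddSubgroup (X →ₘ[S.μ] ℝ) where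
  carrier := {f | (∃ C : ℝ, ∀ᵐ x ∂S.μ, |f x| ≤ C) ∧
    (b → ∀ᵐ x ∂S.μ, ∃ k : ℤ, f x = (k : ℝ))}
  add_mem' := by
    rintro f g ⟨⟨C, hC⟩, hf⟩ ⟨⟨D, hD⟩, hg⟩
    constructor
    · refine ⟨C + D, ?_⟩
      filter_upwards [hC, hD, AEEqFun.coeFn_add f g] with x h1 h2 h3
      rw [h3]
      exact (abs_add_le _ _).trans (add_le_add h1 h2)
    · intro hb
      filter_upwards [hf hb, hg hb, AEEqFun.coeFn_add f g] with x ⟨k, hk⟩ ⟨l, hl⟩ h3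
      exact ⟨k + l, by rw [h3]; simp [Pi.add_apply, hk, hl]⟩
  zero_mem' := by
    constructor
    · refine ⟨0, ?_⟩
      filter_upwards [AEEqFun.coeFn_zero (μ := S.μ) (β := ℝ)] with x h
      simp [h]
    · intro _
      filter_upwards [AEEqFun.coeFn_zero (μ := S.μ) (β := ℝ)] with x h
      exact ⟨0, by simp [h]⟩
  neg_mem' := by
    rintro f ⟨⟨C, hC⟩, hf⟩
    constructor
    · refine ⟨C, ?_⟩
      filter_upwards [hC, AEEqFun.coeFn_neg f] with x h1 h2
      rw [h2]; simpa using h1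
    · intro hb
      filter_upwards [hf hb, AEEqFun.coeFn_neg f] with x ⟨k, hk⟩ h2
      exact ⟨-k, by rw [h2]; simp [hk]⟩

/-- The right `Γ`-action on `L^∞`: `(f · g)(x) = f(g • x)`. -/
def rhoG (S : StdStr Γ X) (b : Bool) (g : Γ) (f : (LinfG S b)) : (LinfG S b) :=
  ⟨AEEqFun.compMeasurePreserving (f : X →ₘ[S.μ] ℝ) (S.act g) (S.meas g), by
    obtain ⟨⟨C, hC⟩, hf⟩ := f.2
    constructor
    · refine ⟨C, ?_⟩
      have := (S.meas g).quasiMeasurePreserving.ae hC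
      filter_upwards [AEEqFun.coeFn_compMeasurePreserving
        (f : X →ₘ[S.μ] ℝ) (S.meas g), this] with x h1 h2
      rw [h1]; exact h2
    · intro hb
      have := (S.meas g).quasiMeasurePreserving.ae (hf hb)
      filter_upwards [AEEqFun.coeFn_compMeasurePreserving
        (f : X →ₘ[S.μ] ℝ) (S.meas g), this] with x h1 h2
      rw [h1]; exact h2⟩

/-- The constant function with (integer) value `k` in the coefficient module. -/
def constLG (S : StdStr Γ X) (b : Bool) (k : ℤ) : (LinfG S b) :=
  ⟨k • (AEEqFun.const X (1 : ℝ) : X →ₘ[S.μ] ℝ), by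
    constructor
    · refine ⟨|(k : ℝ)|, ?_⟩
      have h1 : ((k • (AEEqFun.const X (1 : ℝ) : X →ₘ[S.μ] ℝ)) : X →ₘ[S.μ] ℝ)
          =ᵐ[S.μ] fun _ => (k : ℝ) := by
        filter_upwards [AEEqFun.coeFn_smul (k : ℤ) (AEEqFun.const X (1 : ℝ) : X →ₘ[S.μ] ℝ),
          AEEqFun.coeFn_const X (1 : ℝ)] with x h2 h3
        simp [h2, h3]
      filter_upwards [h1] with x h
      rw [h]
    · intro _
      have h1 : ((k • (AEEqFun.const X (1 : ℝ) : X →ₘ[S.μ] ℝ)) : X →ₘ[S.μ] ℝ)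
          =ᵐ[S.μ] fun _ => (k : ℝ) := by
        filter_upwards [AEEqFun.coeFn_smul (k : ℤ) (AEEqFun.const X (1 : ℝ) : X →ₘ[S.μ] ℝ),
          AEEqFun.coeFn_const X (1 : ℝ)] with x h2 h3
        simp [h2, h3]
      filter_upwards [h1] with x h
      exact ⟨k, h⟩⟩

theorem constLG_zero (S : StdStr Γ X) (b : Bool) : constLG S b 0 = 0 :=
  Subtype.ext (zero_smul ℤ _)

variable {Mt : Type} [TopologicalSpace Mt]

/-- Change of coefficients from `ℤ` to `L^∞` (constant functions) on chains of the
universal covering; this realises `C_*(M̃;ℤ) → L^∞ ⊗ C_*(M̃;ℤ)` at the chain level. -/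
def iotaChain (S : StdStr Γ X) (b : Bool) {n : ℕ} (c : SChains n Mt ℤ) :
    SChains n Mt (LinfG S b) :=
  Finsupp.mapRange (constLG S b) (constLG_zero S b) c

/-- The submodule of relations defining the twisted coefficients
`L^∞(X;ℤ) ⊗_{ℤΓ} C_n(M̃;ℤ)`:  it is spanned by the elements
`(g·σ) ⊗ f - σ ⊗ (f·g)`. -/
def relSub (n : ℕ) (actM : Γ → C(Mt, Mt)) (S : StdStr Γ X) (b : Bool) :
    Submodule ℤ (SChains n Mt (LinfG S b)) :=
  Submodule.span ℤ {c | ∃ (g : Γ) (σ : SSimplex n Mt) (f : (LinfG S b)),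
    c = Finsupp.single ((actM g).comp σ) f - Finsupp.single σ (rhoG S b g f)}

/-- The parametrised `ℓ¹`-norm `Σ_σ ∫_X |f_σ| dμ` of a twisted chain. -/
def normP (S : StdStr Γ X) (b : Bool) {n : ℕ} (c : SChains n Mt (LinfG S b)) : ℝ :=
  c.sum fun _ f => ∫ x, |(f : X →ₘ[S.μ] ℝ) x| ∂S.μ

/-- Pushforward of chains along the covering projection. -/
def pushf {M : Type} [TopologicalSpace M] (π : C(Mt, M)) {n : ℕ}
    (c : SChains n Mt ℤ) : SChains n M ℤ :=
  Finsupp.mapDomain (fun σ => π.comp σ) c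

/-- `c` is an `X`-parametrised fundamental cycle for the fundamental cycle `z` of `M`:
working in the model `L^∞ ⊗_{ℤΓ} C_*(M̃;ℤ) = C_*(M̃;L^∞)/rel`, the chain `c` is a cycle
of the quotient complex and represents the image of the class of `z` under the change of
coefficients given by the constant inclusion `ℤ ↪ L^∞`. -/
def IsPFC (n : ℕ) (Γ : Type) [Group Γ] (Mt M : Type) [TopologicalSpace Mt]
    [TopologicalSpace M] (π : C(Mt, M)) (actM : Γ → C(Mt, Mt))
    (X : Type) [MeasurableSpace X] (S : StdStr Γ X) (b : Bool)
    (z : SChains n M ℤ) (c : SChains n Mt (LinfG S b)) : Prop :=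
  bdryFrom n Mt (LinfG S b) c ∈ relSub (n - 1) actM S b ∧
  ∃ zt : SChains n Mt ℤ, pushf π zt = z ∧
    c - iotaChain S b zt ∈ relSub n actM S b ⊔ bdriesSub n Mt (LinfG S b)

/-- The `X`-parametrised simplicial volume `⎸M⎹^X` (with integral coefficients for
`b = true`, with real coefficients for `b = false`). -/
def pSV (b : Bool) (n : ℕ) (Γ : Type) [Group Γ] (Mt M : Type) [TopologicalSpace Mt]
    [TopologicalSpace M] (π : C(Mt, M)) (actM : Γ → C(Mt, Mt))
    (X : Type) [MeasurableSpace X] (S : StdStr Γ X) (z : SChains n M ℤ) : ℝ :=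
  sInf {r : ℝ | ∃ c, IsPFC n Γ Mt M π actM X S b z c ∧ r = normP S b c}

/-- The integral foliated simplicial volume `⎸M⎹`: the infimum of the `X`-parametrised
simplicial volumes over all standard `Γ`-spaces `X`. -/
def ifsv (n : ℕ) (Γ : Type) [Group Γ] (Mt M : Type) [TopologicalSpace Mt]
    [TopologicalSpace M] (π : C(Mt, M)) (actM : Γ → C(Mt, Mt))
    (z : SChains n M ℤ) : ℝ :=
  sInf {r : ℝ | ∃ (X : Type) (mX : MeasurableSpace X) (S : @StdStr Γ _ X mX),
    r = @pSV true n Γ _ Mt M _ _ π actM X mX S z}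

/-- `π : M̃ → M` is a universal covering with deck transformation action `actM` of `Γ`
(so that `Γ` is identified with the fundamental group of `M`). -/
structure UnivCover (Γ : Type) [Group Γ] (Mt M : Type) [TopologicalSpace Mt]
    [TopologicalSpace M] (π : C(Mt, M)) (actM : Γ → C(Mt, Mt)) : Prop where
  covering : IsCoveringMap π
  simplyConnected : SimplyConnectedSpace Mt
  deck_proj : ∀ g x, π (actM g x) = π x
  deck_trans : ∀ x y, π x = π y → ∃ g, actM g x = y
  deck_free : ∀ g x, actM g x = x → g = 1
  act_one : ∀ x, actM 1 x = x
  act_mul : ∀ g h x, actM (g * h) x = actM g (actM h x)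

end
section Aux

instance TSimplex.instNonempty (n : ℕ) : Nonempty (TSimplex n) := by
  refine ⟨⟨show Fin (n+1) → NNReal from fun i => if i = 0 then 1 else 0, ?_⟩⟩
  show ∑ i : Fin (n+1), (if i = 0 then (1:NNReal) else 0) = 1
  simp

instance TSimplex.instPathConnected (n : ℕ) : PathConnectedSpace (TSimplex n) := by
  refine ⟨inferInstance, fun f g => ?_⟩
  have hσc : Continuous fun t : unitInterval => Real.toNNReal t.1 :=
    continuous_real_toNNReal.comp continuous_subtype_val
  have hσ1 : ∀ t : unitInterval, Real.toNNReal t.1 ≤ 1 := fun t => by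
    rw [show (1:NNReal) = Real.toNNReal 1 by simp]
    exact Real.toNNReal_le_toNNReal t.2.2
  refine ⟨⟨⟨fun t => ⟨fun i => (1 - Real.toNNReal t.1) * f.1 i + Real.toNNReal t.1 * g.1 i, ?_⟩, ?_⟩, ?_, ?_⟩⟩
  · have hf : ∑ i, f.1 i = 1 := f.2
    have hg : ∑ i, g.1 i = 1 := g.2
    show ∑ i, ((1 - Real.toNNReal t.1) * f.1 i + Real.toNNReal t.1 * g.1 i) = 1
    rw [Finset.sum_add_distrib, ← Finset.mul_sum, ← Finset.mul_sum, hf, hg, mul_one, mul_one,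
      tsub_add_cancel_of_le (hσ1 t)]
  · refine Continuous.subtype_mk (continuous_pi fun i => ?_) _
    exact ((continuous_const.sub hσc).mul continuous_const).add (hσc.mul continuous_const)
  · apply Subtype.ext; funext i; simp
  · apply Subtype.ext; funext i
    simp [tsub_self]

section Lift
variable {Γ : Type} [Group Γ] {Mt M : Type} [TopologicalSpace Mt] [TopologicalSpace M]
  {π : C(Mt, M)} {actM : Γ → C(Mt, Mt)}

theorem lift_unique (hU : UnivCover Γ Mt M π actM) {m : ℕ} (σ σ' : C(TSimplex m, Mt))
    (h : π.comp σ = π.comp σ') : ∃ g : Γ, (actM g).comp σ' = σ := by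
  obtain ⟨p⟩ := TSimplex.instNonempty m
  have hp : π (σ' p) = π (σ p) := by
    have := ContinuousMap.congr_fun h p
    exact this.symm
  obtain ⟨g, hg⟩ := hU.deck_trans (σ' p) (σ p) hp
  refine ⟨g, ?_⟩
  have hcomp : (π : Mt → M) ∘ ((actM g).comp σ' : TSimplex m → Mt) = (π : Mt → M) ∘ σ := by
    funext t
    have h1 : π (actM g (σ' t)) = π (σ' t) := hU.deck_proj g (σ' t)
    have h2 : π (σ t) = π (σ' t) := ContinuousMap.congr_fun h t
    simp [ContinuousMap.comp, h1, h2]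
  have := hU.covering.eq_of_comp_eq ((actM g).comp σ').continuous σ.continuous hcomp p hg
  exact ContinuousMap.ext fun t => congrFun this t
end Lift

section ChainAlg
variable {X : Type} [TopologicalSpace X] {A B : Type} [AddCommGroup A] [AddCommGroup B]

theorem bdryMap_single (n : ℕ) (σ : SSimplex (n+1) X) (a : A) :
    bdryMap n X A (Finsupp.single σ a) =
      ∑ i : Fin (n + 2), Finsupp.single (σ.comp (face n i)) (((-1 : ℤ) ^ (i : ℕ)) • a) := by
  rw [bdryMap, Finsupp.lsum_single, LinearMap.sum_apply]
  refine Finset.sum_congr rfl fun i _ => ?_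
  rw [LinearMap.smul_apply, Finsupp.lsingle_apply, Finsupp.smul_single]

theorem mapRange_bdryMap (h : A →+ B) (n : ℕ) (c : SChains (n+1) X A) :
    Finsupp.mapRange h h.map_zero (bdryMap n X A c)
      = bdryMap n X B (Finsupp.mapRange h h.map_zero c) := by
  induction c using Finsupp.induction_linear with
  | zero => simp
  | add f g hf hg =>
      rw [map_add, Finsupp.mapRange_add h.map_add, Finsupp.mapRange_add h.map_add, map_add,
        hf, hg]
  | single σ a =>
      rw [bdryMap_single, Finsupp.mapRange_single, bdryMap_single,
        Finsupp.mapRange_finset_sum (h : A →+ B)]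
      refine Finset.sum_congr rfl fun i _ => ?_
      rw [Finsupp.mapRange_single, map_zsmul]

theorem mapRange_bdryFrom (h : A →+ B) (n : ℕ) (c : SChains n X A) :
    Finsupp.mapRange h h.map_zero (bdryFrom n X A c)
      = bdryFrom n X B (Finsupp.mapRange h h.map_zero c) := by
  match n with
  | 0 => simp [bdryFrom]
  | (m+1) => exact mapRange_bdryMap h m c

theorem mapDomain_bdryMap {Y : Type} [TopologicalSpace Y] (φ : C(X, Y)) (n : ℕ)
    (c : SChains (n+1) X A) :
    Finsupp.mapDomain (fun σ : SSimplex n X => φ.comp σ) (bdryMap n X A c)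
      = bdryMap n Y A (Finsupp.mapDomain (fun σ : SSimplex (n+1) X => φ.comp σ) c) := by
  induction c using Finsupp.induction_linear with
  | zero => simp [Finsupp.mapDomain_zero]
  | add f g hf hg => rw [map_add, Finsupp.mapDomain_add, Finsupp.mapDomain_add, map_add, hf, hg]
  | single σ a =>
      rw [bdryMap_single, Finsupp.mapDomain_single, bdryMap_single]
      rw [Finsupp.mapDomain_finset_sum]
      refine Finset.sum_congr rfl fun i _ => ?_
      rw [Finsupp.mapDomain_single, ContinuousMap.comp_assoc]

theorem pushf_bdryFrom {Y : Type} [TopologicalSpace Y] (φ : C(X, Y)) (n : ℕ)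
    (c : SChains n X ℤ) :
    pushf φ (bdryFrom n X ℤ c) = bdryFrom n Y ℤ (pushf φ c) := by
  match n with
  | 0 => simp [bdryFrom, pushf, Finsupp.mapDomain_zero]
  | (m+1) => exact mapDomain_bdryMap φ m c

/-- A finitely supported integer function killed by `mapDomain q` lies in the span of
the differences `single a 1 - single a' 1` with `q a = q a'`. -/
theorem mem_span_of_mapDomain_eq_zero {α β : Type} (q : α → β) (w : α →₀ ℤ)
    (hw : Finsupp.mapDomain q w = 0) :
    w ∈ Submodule.span ℤ {c : α →₀ ℤ |
      ∃ a a' : α, q a = q a' ∧ c = Finsupp.single a 1 - Finsupp.single a' 1} := by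
  classical
  rcases isEmpty_or_nonempty α with hα | hα
  · have : w = 0 := Finsupp.ext fun a => (hα.false a).elim
    simp [this]
  set r : β → α := fun b =>
    if h : ∃ a, q a = b then h.choose else Classical.arbitrary α with hr
  have hrq : ∀ a : α, q (r (q a)) = q a := by
    intro a
    have h : ∃ a', q a' = q a := ⟨a, rfl⟩
    simp only [hr, dif_pos h]
    exact h.choose_spec
  have h1 : ∑ a ∈ w.support, w a • (Finsupp.single a (1:ℤ)) = w := by
    have he : ∀ a ∈ w.support, w a • (Finsupp.single a (1:ℤ)) = Finsupp.single a (w a) :=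
      fun a _ => by rw [Finsupp.smul_single, smul_eq_mul, mul_one]
    rw [Finset.sum_congr rfl he]
    exact w.sum_single
  have h2 : ∑ a ∈ w.support, w a • (Finsupp.single (r (q a)) (1:ℤ))
      = Finsupp.mapDomain (fun a => r (q a)) w := by
    rw [Finsupp.mapDomain, Finsupp.sum]
    refine Finset.sum_congr rfl fun a _ => ?_
    rw [Finsupp.smul_single, smul_eq_mul, mul_one]
  have h3 : Finsupp.mapDomain (fun a => r (q a)) w = 0 := by
    have hc : (fun a => r (q a)) = r ∘ q := rfl
    rw [hc, Finsupp.mapDomain_comp, hw, Finsupp.mapDomain_zero]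
  have key : ∑ a ∈ w.support, w a • (Finsupp.single a (1:ℤ) - Finsupp.single (r (q a)) 1)
      = w := by
    simp only [smul_sub]
    rw [Finset.sum_sub_distrib, h1, h2, h3, sub_zero]
  rw [← key]
  refine Submodule.sum_mem _ fun a _ => Submodule.smul_mem _ _ (Submodule.subset_span ?_)
  exact ⟨a, r (q a), (hrq a).symm, rfl⟩

end ChainAlg

noncomputable section Coeff
open MeasureTheory
variable {Γ : Type} [Group Γ] {X Y : Type} [MeasurableSpace X] [MeasurableSpace Y]

theorem constLG_coeFn (S : StdStr Γ X) (b : Bool) (k : ℤ) :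
    ((constLG S b k : LinfG S b) : X →ₘ[S.μ] ℝ) =ᵐ[S.μ] fun _ => (k : ℝ) := by
  filter_upwards [AEEqFun.coeFn_smul (k : ℤ) (AEEqFun.const X (1 : ℝ) : X →ₘ[S.μ] ℝ),
    AEEqFun.coeFn_const X (1 : ℝ)] with x h2 h3
  show ((k • (AEEqFun.const X (1 : ℝ) : X →ₘ[S.μ] ℝ)) : X →ₘ[S.μ] ℝ) x = (k : ℝ)
  rw [h2]; simp [h3]

theorem constLG_add (S : StdStr Γ X) (b : Bool) (k l : ℤ) :
    constLG S b (k + l) = constLG S b k + constLG S b l := by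
  apply Subtype.ext
  show (k + l) • (AEEqFun.const X (1 : ℝ) : X →ₘ[S.μ] ℝ) = k • _ + l • _
  rw [add_smul]

/-- `constLG` as an additive homomorphism. -/
def constHom (S : StdStr Γ X) (b : Bool) : ℤ →+ LinfG S b :=
  AddMonoidHom.mk' (constLG S b) (constLG_add S b)

theorem rhoG_const (S : StdStr Γ X) (b : Bool) (g : Γ) (k : ℤ) :
    rhoG S b g (constLG S b k) = constLG S b k := by
  apply Subtype.ext
  apply AEEqFun.ext
  filter_upwards [AEEqFun.coeFn_compMeasurePreserving
      ((constLG S b k : LinfG S b) : X →ₘ[S.μ] ℝ) (S.meas g),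
    (S.meas g).quasiMeasurePreserving.ae (constLG_coeFn S b k),
    constLG_coeFn S b k] with x h1 h2 h3
  rw [show ((rhoG S b g (constLG S b k) : LinfG S b) : X →ₘ[S.μ] ℝ) x
      = (((constLG S b k : LinfG S b) : X →ₘ[S.μ] ℝ).compMeasurePreserving
          (S.act g) (S.meas g)) x from rfl, h1]
  exact h2.trans h3.symm

variable (S : StdStr Γ X) (T : StdStr Γ Y) (e : X → Y)

/-- Pull back an element of `L^∞(Y)` along a measure preserving map `X → Y`. -/
def pullF (he : MeasurePreserving e S.μ T.μ) (b : Bool) (f : LinfG T b) : LinfG S b :=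
  ⟨AEEqFun.compMeasurePreserving (f : Y →ₘ[T.μ] ℝ) e he, by
    obtain ⟨⟨C, hC⟩, hf⟩ := f.2
    constructor
    · refine ⟨C, ?_⟩
      filter_upwards [AEEqFun.coeFn_compMeasurePreserving (f : Y →ₘ[T.μ] ℝ) he,
        he.quasiMeasurePreserving.ae hC] with x h1 h2
      rw [h1]; exact h2
    · intro hb
      filter_upwards [AEEqFun.coeFn_compMeasurePreserving (f : Y →ₘ[T.μ] ℝ) he,
        he.quasiMeasurePreserving.ae (hf hb)] with x h1 h2
      rw [h1]; exact h2⟩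

theorem pullF_coeFn (he : MeasurePreserving e S.μ T.μ) (b : Bool) (f : LinfG T b) :
    ((pullF S T e he b f : LinfG S b) : X →ₘ[S.μ] ℝ) =ᵐ[S.μ]
      fun x => (f : Y →ₘ[T.μ] ℝ) (e x) :=
  AEEqFun.coeFn_compMeasurePreserving (f : Y →ₘ[T.μ] ℝ) he

theorem pullF_add (he : MeasurePreserving e S.μ T.μ) (b : Bool) (f g : LinfG T b) :
    pullF S T e he b (f + g) = pullF S T e he b f + pullF S T e he b g := by
  apply Subtype.ext
  apply AEEqFun.ext
  filter_upwards [pullF_coeFn S T e he b (f + g),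
    he.quasiMeasurePreserving.ae (AEEqFun.coeFn_add (f : Y →ₘ[T.μ] ℝ) (g : Y →ₘ[T.μ] ℝ)),
    AEEqFun.coeFn_add ((pullF S T e he b f : LinfG S b) : X →ₘ[S.μ] ℝ)
      ((pullF S T e he b g : LinfG S b) : X →ₘ[S.μ] ℝ),
    pullF_coeFn S T e he b f, pullF_coeFn S T e he b g] with x h1 h2 h3 h4 h5
  show ((pullF S T e he b (f + g) : LinfG S b) : X →ₘ[S.μ] ℝ) x
      = (((pullF S T e he b f : LinfG S b) : X →ₘ[S.μ] ℝ)
          + ((pullF S T e he b g : LinfG S b) : X →ₘ[S.μ] ℝ)) x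
  rw [h1, h3, Pi.add_apply, h4, h5]
  exact h2

/-- `pullF` as an additive homomorphism. -/
def pullHom (he : MeasurePreserving e S.μ T.μ) (b : Bool) : LinfG T b →+ LinfG S b :=
  AddMonoidHom.mk' (pullF S T e he b) (pullF_add S T e he b)

theorem pullF_const (he : MeasurePreserving e S.μ T.μ) (b : Bool) (k : ℤ) :
    pullF S T e he b (constLG T b k) = constLG S b k := by
  apply Subtype.ext
  apply AEEqFun.ext
  filter_upwards [pullF_coeFn S T e he b (constLG T b k),
    he.quasiMeasurePreserving.ae (constLG_coeFn T b k),
    constLG_coeFn S b k] with x h1 h2 h3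
  rw [h1, h3]
  exact h2

theorem pullF_rho (he : MeasurePreserving e S.μ T.μ)
    (heq : ∀ g x, e (S.act g x) = T.act g (e x)) (b : Bool) (g : Γ) (f : LinfG T b) :
    pullF S T e he b (rhoG T b g f) = rhoG S b g (pullF S T e he b f) := by
  apply Subtype.ext
  apply AEEqFun.ext
  filter_upwards [pullF_coeFn S T e he b (rhoG T b g f),
    he.quasiMeasurePreserving.ae
      (AEEqFun.coeFn_compMeasurePreserving (f : Y →ₘ[T.μ] ℝ) (T.meas g)),
    AEEqFun.coeFn_compMeasurePreserving
      ((pullF S T e he b f : LinfG S b) : X →ₘ[S.μ] ℝ) (S.meas g),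
    (S.meas g).quasiMeasurePreserving.ae (pullF_coeFn S T e he b f)]
    with x h1 h2 h3 h4
  show ((pullF S T e he b (rhoG T b g f) : LinfG S b) : X →ₘ[S.μ] ℝ) x
      = (((pullF S T e he b f : LinfG S b) : X →ₘ[S.μ] ℝ).compMeasurePreserving
          (S.act g) (S.meas g)) x
  rw [h1, h3, Function.comp_apply, h4]
  show ((rhoG T b g f : LinfG T b) : Y →ₘ[T.μ] ℝ) (e x) = (f : Y →ₘ[T.μ] ℝ) (e (S.act g x))
  rw [show ((rhoG T b g f : LinfG T b) : Y →ₘ[T.μ] ℝ)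
      = ((f : Y →ₘ[T.μ] ℝ).compMeasurePreserving (T.act g) (T.meas g)) from rfl]
  rw [h2, Function.comp_apply, heq g x]

theorem pullF_integral (he : MeasurePreserving e S.μ T.μ) (b : Bool) (f : LinfG T b) :
    ∫ x, |((pullF S T e he b f : LinfG S b) : X →ₘ[S.μ] ℝ) x| ∂S.μ
      = ∫ y, |(f : Y →ₘ[T.μ] ℝ) y| ∂T.μ := by
  have h1 : ∫ x, |((pullF S T e he b f : LinfG S b) : X →ₘ[S.μ] ℝ) x| ∂S.μ
      = ∫ x, |(f : Y →ₘ[T.μ] ℝ) (e x)| ∂S.μ := by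
    refine integral_congr_ae ?_
    filter_upwards [pullF_coeFn S T e he b f] with x hx
    rw [hx]
  rw [h1]
  have hmeas : AEStronglyMeasurable (fun y => |(f : Y →ₘ[T.μ] ℝ) y|) (Measure.map e S.μ) := by
    rw [he.map_eq]
    simpa [Real.norm_eq_abs] using (f : Y →ₘ[T.μ] ℝ).aestronglyMeasurable.norm
  have h2 := integral_map he.measurable.aemeasurable hmeas
  rw [he.map_eq] at h2
  exact h2.symm

end Coeff

noncomputable section ChainPull
open MeasureTheory
variable {Γ : Type} [Group Γ] {Mt M : Type} [TopologicalSpace Mt] [TopologicalSpace M]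
  {X Y : Type} [MeasurableSpace X] [MeasurableSpace Y]

theorem integral_abs_zero (S : StdStr Γ X) (b : Bool) :
    ∫ x, |((0 : LinfG S b) : X →ₘ[S.μ] ℝ) x| ∂S.μ = 0 := by
  have h : ∀ᵐ x ∂S.μ, |((0 : LinfG S b) : X →ₘ[S.μ] ℝ) x| = 0 := by
    filter_upwards [AEEqFun.coeFn_zero (μ := S.μ) (β := ℝ)] with x hx
    show |((0 : X →ₘ[S.μ] ℝ)) x| = 0
    rw [hx]; simp
  rw [integral_congr_ae h, integral_zero]

variable (S : StdStr Γ X) (T : StdStr Γ Y) (e : X → Y)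

/-- Pullback of twisted chains along a measure-preserving map. -/
def pullChain (he : MeasurePreserving e S.μ T.μ) (b : Bool) {n : ℕ}
    (c : SChains n Mt (LinfG T b)) : SChains n Mt (LinfG S b) :=
  Finsupp.mapRange (pullHom S T e he b) (map_zero _) c

theorem pullChain_bdryFrom (he : MeasurePreserving e S.μ T.μ) (b : Bool) (n : ℕ)
    (c : SChains n Mt (LinfG T b)) :
    pullChain S T e he b (bdryFrom n Mt (LinfG T b) c)
      = bdryFrom n Mt (LinfG S b) (pullChain S T e he b c) :=
  mapRange_bdryFrom (pullHom S T e he b) n c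

theorem pullChain_sub (he : MeasurePreserving e S.μ T.μ) (b : Bool) {n : ℕ}
    (c d : SChains n Mt (LinfG T b)) :
    pullChain S T e he b (c - d) = pullChain S T e he b c - pullChain S T e he b d :=
  Finsupp.mapRange_sub (map_sub _) c d

theorem pullChain_rel (actM : Γ → C(Mt, Mt)) (he : MeasurePreserving e S.μ T.μ)
    (heq : ∀ g x, e (S.act g x) = T.act g (e x)) (b : Bool) {n : ℕ}
    {c : SChains n Mt (LinfG T b)} (hc : c ∈ relSub n actM T b) :
    pullChain S T e he b c ∈ relSub n actM S b := by
  refine Submodule.span_induction ?_ ?_ ?_ ?_ hc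
  · rintro w ⟨g, σ, f, rfl⟩
    rw [pullChain_sub]
    rw [show pullChain S T e he b (Finsupp.single ((actM g).comp σ) f)
        = Finsupp.single ((actM g).comp σ) (pullF S T e he b f) from Finsupp.mapRange_single]
    rw [show pullChain S T e he b (Finsupp.single σ (rhoG T b g f))
        = Finsupp.single σ (pullF S T e he b (rhoG T b g f)) from Finsupp.mapRange_single]
    rw [pullF_rho S T e he heq b g f]
    exact Submodule.subset_span ⟨g, σ, pullF S T e he b f, rfl⟩
  · rw [show pullChain S T e he b 0 = 0 from Finsupp.mapRange_zero]
    exact Submodule.zero_mem _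
  · intro u v _ _ hu hv
    rw [show pullChain S T e he b (u + v) = pullChain S T e he b u + pullChain S T e he b v
      from Finsupp.mapRange_add (map_add _) u v]
    exact Submodule.add_mem _ hu hv
  · intro k u _ hu
    rw [show pullChain S T e he b (k • u) = k • pullChain S T e he b u from
      map_zsmul (Finsupp.mapRange.addMonoidHom (pullHom S T e he b)) k u]
    exact Submodule.smul_mem _ k hu

theorem pullChain_bdries (he : MeasurePreserving e S.μ T.μ) (b : Bool) {n : ℕ}
    {c : SChains n Mt (LinfG T b)} (hc : c ∈ bdriesSub n Mt (LinfG T b)) :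
    pullChain S T e he b c ∈ bdriesSub n Mt (LinfG S b) := by
  obtain ⟨d, rfl⟩ := hc
  exact ⟨pullChain S T e he b d, (mapRange_bdryMap (pullHom S T e he b) n d).symm⟩

theorem pullChain_iota (he : MeasurePreserving e S.μ T.μ) (b : Bool) {n : ℕ}
    (zt : SChains n Mt ℤ) :
    pullChain S T e he b (iotaChain T b zt) = iotaChain S b zt := by
  apply Finsupp.ext
  intro σ
  rw [pullChain, Finsupp.mapRange_apply, iotaChain, iotaChain, Finsupp.mapRange_apply,
    Finsupp.mapRange_apply]
  exact pullF_const S T e he b (zt σ)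

theorem normP_pullChain (he : MeasurePreserving e S.μ T.μ) (b : Bool) {n : ℕ}
    (c : SChains n Mt (LinfG T b)) :
    normP S b (pullChain S T e he b c) = normP T b c := by
  rw [normP, pullChain, Finsupp.sum_mapRange_index (fun _ => integral_abs_zero S b)]
  exact Finsupp.sum_congr fun σ _ => pullF_integral S T e he b _

theorem isPFC_pull (n : ℕ) (π : C(Mt, M)) (actM : Γ → C(Mt, Mt))
    (he : MeasurePreserving e S.μ T.μ)
    (heq : ∀ g x, e (S.act g x) = T.act g (e x)) (b : Bool) (z : SChains n M ℤ)
    {c : SChains n Mt (LinfG T b)} (hc : IsPFC n Γ Mt M π actM Y T b z c) :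
    IsPFC n Γ Mt M π actM X S b z (pullChain S T e he b c) := by
  obtain ⟨h1, zt, hzt, h2⟩ := hc
  constructor
  · rw [← pullChain_bdryFrom]
    exact pullChain_rel S T e actM he heq b h1
  · refine ⟨zt, hzt, ?_⟩
    rw [← pullChain_iota S T e he b zt, ← pullChain_sub]
    obtain ⟨u, hu, v, hv, huv⟩ := Submodule.mem_sup.mp h2
    rw [← huv, show pullChain S T e he b (u + v) = pullChain S T e he b u + pullChain S T e he b v
      from Finsupp.mapRange_add (map_add _) u v]
    exact Submodule.mem_sup.mpr ⟨_, pullChain_rel S T e actM he heq b hu, _,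
      pullChain_bdries S T e he b hv, rfl⟩

end ChainPull

noncomputable section IotaPFC
open MeasureTheory
variable {Γ : Type} [Group Γ] {Mt M : Type} [TopologicalSpace Mt] [TopologicalSpace M]
  {X : Type} [MeasurableSpace X]

theorem constLG_sub (S : StdStr Γ X) (b : Bool) (k l : ℤ) :
    constLG S b (k - l) = constLG S b k - constLG S b l :=
  map_sub (constHom S b) k l

theorem iota_ker_rel (π : C(Mt, M)) (actM : Γ → C(Mt, Mt)) (hU : UnivCover Γ Mt M π actM)
    (S : StdStr Γ X) (b : Bool) {m : ℕ} (w : SChains m Mt ℤ) (hw : pushf π w = 0) :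
    iotaChain S b w ∈ relSub m actM S b := by
  have hsp := mem_span_of_mapDomain_eq_zero (fun σ : SSimplex m Mt => π.comp σ) w hw
  refine Submodule.span_induction ?_ ?_ ?_ ?_ hsp
  · rintro x ⟨a, a', hq, rfl⟩
    obtain ⟨g, hg⟩ := lift_unique hU a a' hq
    rw [show iotaChain S b (Finsupp.single a 1 - Finsupp.single a' 1)
        = Finsupp.single a (constLG S b 1) - Finsupp.single a' (constLG S b 1) by
      rw [iotaChain, Finsupp.mapRange_sub (constLG_sub S b), Finsupp.mapRange_single,
        Finsupp.mapRange_single]]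
    refine Submodule.subset_span ⟨g, a', constLG S b 1, ?_⟩
    rw [hg, rhoG_const]
  · rw [show iotaChain S b 0 = 0 from Finsupp.mapRange_zero]
    exact Submodule.zero_mem _
  · intro u v _ _ hu hv
    rw [show iotaChain S b (u + v) = iotaChain S b u + iotaChain S b v from
      Finsupp.mapRange_add (constLG_add S b) u v]
    exact Submodule.add_mem _ hu hv
  · intro k u _ hu
    rw [show iotaChain S b (k • u) = k • iotaChain S b u from
      map_zsmul (Finsupp.mapRange.addMonoidHom (constHom S b)) k u]
    exact Submodule.smul_mem _ k hu

theorem isPFC_iota (n : ℕ) (π : C(Mt, M)) (actM : Γ → C(Mt, Mt))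
    (hU : UnivCover Γ Mt M π actM) (S : StdStr Γ X) (b : Bool) (z : SChains n M ℤ)
    (hz0 : bdryFrom n M ℤ z = 0) (zt : SChains n Mt ℤ) (hzt : pushf π zt = z) :
    IsPFC n Γ Mt M π actM X S b z (iotaChain S b zt) := by
  constructor
  · have hcomm : bdryFrom n Mt (LinfG S b) (iotaChain S b zt)
        = iotaChain S b (bdryFrom n Mt ℤ zt) :=
      (mapRange_bdryFrom (constHom S b) n zt).symm
    rw [hcomm]
    refine iota_ker_rel π actM hU S b _ ?_
    rw [pushf_bdryFrom, hzt, hz0]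
  · exact ⟨zt, hzt, by rw [sub_self]; exact Submodule.zero_mem _⟩

theorem normP_nonneg (S : StdStr Γ X) (b : Bool) {n : ℕ} (c : SChains n Mt (LinfG S b)) :
    0 ≤ normP S b c := by
  rw [normP, Finsupp.sum]
  exact Finset.sum_nonneg fun _ _ => integral_nonneg fun _ => abs_nonneg _

/-- Key comparison: a measure-preserving equivariant map `e : X → Y` yields
`⎸M⎹^X ≤ ⎸M⎹^Y`. -/
theorem pSV_le_of_equivariant (n : ℕ) (π : C(Mt, M)) (actM : Γ → C(Mt, Mt))
    (hU : UnivCover Γ Mt M π actM) (z : SChains n M ℤ) (hz0 : bdryFrom n M ℤ z = 0)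
    {Y : Type} [MeasurableSpace Y] (S : StdStr Γ X) (T : StdStr Γ Y) (e : X → Y)
    (he : MeasurePreserving e S.μ T.μ)
    (heq : ∀ g x, e (S.act g x) = T.act g (e x)) (b : Bool) :
    pSV b n Γ Mt M π actM X S z ≤ pSV b n Γ Mt M π actM Y T z := by
  by_cases hPt : {r : ℝ | ∃ c, IsPFC n Γ Mt M π actM Y T b z c ∧ r = normP T b c}.Nonempty
  · refine le_csInf hPt ?_
    rintro r ⟨c, hc, rfl⟩
    refine csInf_le ⟨0, ?_⟩ ?_
    · rintro s ⟨d, _, rfl⟩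
      exact normP_nonneg S b d
    · exact ⟨pullChain S T e he b c, isPFC_pull S T e n π actM he heq b z hc,
        (normP_pullChain S T e he b c).symm⟩
  · have hPs : ¬ {r : ℝ | ∃ c, IsPFC n Γ Mt M π actM X S b z c ∧ r = normP S b c}.Nonempty := by
      rintro ⟨r, c, hc, -⟩
      obtain ⟨-, zt, hzt, -⟩ := hc
      exact hPt ⟨normP T b (iotaChain T b zt),
        iotaChain T b zt, isPFC_iota n π actM hU T b z hz0 zt hzt, rfl⟩
    rw [pSV, pSV, Set.not_nonempty_iff_eq_empty.mp hPt, Set.not_nonempty_iff_eq_empty.mp hPs]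

end IotaPFC

end Aux

open scoped BigOperators in
/-- Let `M` be an oriented closed connected manifold with fundamental
group `Γ`, `I` a nonempty countable set and `(X_i,μ_i)` a family of standard `Γ`-spaces.
Then the product `Z = ∏ᵢ Xᵢ` with the product measure `ζ` (characterised on cylinder
sets) and the diagonal `Γ`-action is a standard `Γ`-space and
`⎸M⎹^Z ≤ infᵢ ⎸M⎹^{Xᵢ}`. -/
theorem parametrised_simplicial_volume_product_le
    (n : ℕ) (Γ : Type) [Group Γ] [Countable Γ]
    (M : Type) [TopologicalSpace M] [CompactSpace M] [ConnectedSpace M] [T2Space M]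
    [ChartedSpace (EuclideanSpace ℝ (Fin n)) M]
    (Mt : Type) [TopologicalSpace Mt] (π : C(Mt, M)) (actM : Γ → C(Mt, Mt))
    (hU : UnivCover Γ Mt M π actM)
    (z : SChains n M ℤ) (hz : IsFundCycle n M z)
    (I : Type) [Countable I] [Nonempty I]
    (Xi : I → Type) [∀ i, MeasurableSpace (Xi i)] (Si : ∀ i, StdStr Γ (Xi i))
    (ζ : MeasureTheory.Measure (∀ i, Xi i)) (hζprob : MeasureTheory.IsProbabilityMeasure ζ)
    (hcyl : ∀ (s : Finset I) (A : ∀ i, Set (Xi i)), (∀ i, MeasurableSet (A i)) →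
      ζ {x | ∀ i ∈ s, x i ∈ A i} = ∏ i ∈ s, (Si i).μ (A i)) :
    ∃ S : StdStr Γ (∀ i, Xi i), S.μ = ζ ∧
      S.act = (fun g x i => (Si i).act g (x i)) ∧
      pSV true n Γ Mt M π actM (∀ i, Xi i) S z ≤ ⨅ i, pSV true n Γ Mt M π actM (Xi i) (Si i) z := by
  classical
  -- the diagonal action
  set actZ : Γ → (∀ i, Xi i) → (∀ i, Xi i) := fun g x i => (Si i).act g (x i) with hactZ
  have hactZmeas : ∀ g, Measurable (actZ g) := fun g =>
    measurable_pi_lambda _ fun i => ((Si i).meas g).measurable.comp (measurable_pi_apply i)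
  -- the π-system of cylinder sets
  set C : Set (Set (∀ i, Xi i)) := {A | ∃ (s : Finset I) (B : ∀ i, Set (Xi i)),
    (∀ i, MeasurableSet (B i)) ∧ A = {x | ∀ i ∈ s, x i ∈ B i}} with hC
  have hcylmeas : ∀ (s : Finset I) (B : ∀ i, Set (Xi i)), (∀ i, MeasurableSet (B i)) →
      MeasurableSet {x : ∀ i, Xi i | ∀ i ∈ s, x i ∈ B i} := by
    intro s B hB
    have : {x : ∀ i, Xi i | ∀ i ∈ s, x i ∈ B i} = ⋂ i ∈ s, (fun x => x i) ⁻¹' (B i) := by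
      ext x; simp
    rw [this]
    exact MeasurableSet.biInter s.countable_toSet fun i _ => measurable_pi_apply i (hB i)
  have hgen : (by infer_instance : MeasurableSpace (∀ i, Xi i))
      = MeasurableSpace.generateFrom C := by
    refine le_antisymm ?_ (MeasurableSpace.generateFrom_le ?_)
    · show (⨆ i, MeasurableSpace.comap (fun x : ∀ j, Xi j => x i) (by infer_instance))
        ≤ MeasurableSpace.generateFrom C
      refine iSup_le fun i => ?_
      rw [← measurable_iff_comap_le]
      intro B hB
      refine MeasurableSpace.measurableSet_generateFrom ?_
      refine ⟨{i}, Function.update (fun _ => Set.univ) i B, ?_, ?_⟩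
      · intro j
        rcases eq_or_ne j i with rfl | hj
        · rw [Function.update_self]; exact hB
        · rw [Function.update_of_ne hj]; exact MeasurableSet.univ
      · ext x
        simp [Function.update_self]
    · rintro A ⟨s, B, hB, rfl⟩
      exact hcylmeas s B hB
  have hpi : IsPiSystem C := by
    rintro A1 ⟨s, B, hB, rfl⟩ A2 ⟨t, D, hD, rfl⟩ -
    refine ⟨s ∪ t, fun i => (if i ∈ s then B i else Set.univ) ∩ (if i ∈ t then D i else Set.univ),
      ?_, ?_⟩
    · intro i
      refine MeasurableSet.inter ?_ ?_ <;> split_ifs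
      · exact hB i
      · exact MeasurableSet.univ
      · exact hD i
      · exact MeasurableSet.univ
    · ext x
      simp only [Set.mem_setOf_eq, Set.mem_inter_iff, Finset.mem_union]
      constructor
      · rintro ⟨h1, h2⟩ i hi
        constructor
        · by_cases hs : i ∈ s
          · rw [if_pos hs]; exact h1 i hs
          · rw [if_neg hs]; trivial
        · by_cases ht : i ∈ t
          · rw [if_pos ht]; exact h2 i ht
          · rw [if_neg ht]; trivial
      · intro h
        constructor
        · intro i hi
          have := (h i (Or.inl hi)).1
          rwa [if_pos hi] at this
        · intro i hi
          have := (h i (Or.inr hi)).2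
          rwa [if_pos hi] at this
  -- the diagonal action preserves ζ
  have hmeasZ : ∀ g, MeasureTheory.MeasurePreserving (actZ g) ζ ζ := by
    intro g
    refine ⟨hactZmeas g, ?_⟩
    haveI : MeasureTheory.IsProbabilityMeasure (ζ.map (actZ g)) :=
      MeasureTheory.Measure.isProbabilityMeasure_map (hactZmeas g).aemeasurable
    refine MeasureTheory.ext_of_generate_finite C hgen hpi ?_ ?_
    · rintro A ⟨s, B, hB, rfl⟩
      rw [MeasureTheory.Measure.map_apply (hactZmeas g) (hcylmeas s B hB)]
      have hpre : actZ g ⁻¹' {x | ∀ i ∈ s, x i ∈ B i}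
          = {x : ∀ i, Xi i | ∀ i ∈ s, x i ∈ (Si i).act g ⁻¹' (B i)} := by
        ext x; simp [hactZ]
      rw [hpre, hcyl s _ (fun i => ((Si i).meas g).measurable (hB i)),
        hcyl s B hB]
      exact Finset.prod_congr rfl fun i _ => ((Si i).meas g).measure_preimage (hB i).nullMeasurableSet
    · rw [MeasureTheory.Measure.map_apply (hactZmeas g) MeasurableSet.univ]
      simp
  -- the product standard Γ-space
  haveI := fun i => (Si i).borel
  set S : StdStr Γ (∀ i, Xi i) :=
    { μ := ζ
      borel := by infer_instance
      prob := hζprob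
      act := actZ
      meas := hmeasZ
      act_one := fun x => by funext i; exact (Si i).act_one (x i)
      act_mul := fun g h x => by funext i; exact (Si i).act_mul g h (x i) } with hS
  refine ⟨S, rfl, rfl, ?_⟩
  -- the coordinate projections are measure preserving and equivariant
  have heval : ∀ i, MeasureTheory.MeasurePreserving (fun x : ∀ j, Xi j => x i) ζ (Si i).μ := by
    intro i
    refine ⟨measurable_pi_apply i, ?_⟩
    refine MeasureTheory.Measure.ext fun A hA => ?_
    rw [MeasureTheory.Measure.map_apply (measurable_pi_apply i) hA]
    have hpre : (fun x : ∀ j, Xi j => x i) ⁻¹' A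
        = {x : ∀ j, Xi j | ∀ j ∈ ({i} : Finset I), x j ∈ Function.update (fun _ => Set.univ) i A j} := by
      ext x
      simp [Function.update_self]
    have hupd : ∀ j, MeasurableSet (Function.update (fun _ => Set.univ) i A j) := by
      intro j
      rcases eq_or_ne j i with rfl | hj
      · rw [Function.update_self]; exact hA
      · rw [Function.update_of_ne hj]; exact MeasurableSet.univ
    rw [hpre, hcyl {i} _ hupd, Finset.prod_singleton, Function.update_self]
  have hz0 : bdryFrom n M ℤ z = 0 := LinearMap.mem_ker.mp hz.1
  refine le_ciInf fun i => ?_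
  exact pSV_le_of_equivariant n π actM hU z hz0 S (Si i) (fun x => x i)
    (heval i) (fun g x => rfl) true
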